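/- Let V be the 5×2 matrix whose i-th row is (cos((i−1)π/5), sin((i−1)π/5)) for i = 1,…,5, and X = V Vᵀ. Then X is positive semidefinite of rank 2, |X_{ij}| = 1 if i = j, cos(π/5) if i − j ≡ ±1 (mod 5), and cos(2π/5) if i − j ≡ ±2 (mod 5); and ⟨J, X ∘ X⟩ / ⟨I + Ā, X ∘ X⟩ = 1 + 10cos(π/5)²/(5 + 10cos(2π/5)²) > 2.099, where Ā is the adjacency matrix of the complement of the 5-cycle C₅ (with vertices i and i±2 mod 5 adjacent in the complement), J the all-ones matrix, I the identity, and ∘ the Hadamard product. -/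

import Mathlib

open scoped Matrix

open Real

set_option maxHeartbeats 1000000 in
/-- The explicit rank-2 witness for `χ'_{vec,3}(C₅) > 2.099`: rows of `V` are
the unit vectors at angles `(i-1)π/5`, `X = V Vᵀ`. Then `X` is PSD of rank 2,
its entries have the given absolute values, and the ratio
`⟨J, X∘X⟩ / ⟨I + Ā, X∘X⟩` equals `1 + 10cos(π/5)²/(5 + 10cos(2π/5)²) > 2.099`,
where `Ā` is the adjacency matrix of the complement of the 5-cycle. -/
theorem c5_witness :
    ∀ (V : Matrix (Fin 5) (Fin 2) ℝ),
    (∀ i : Fin 5, V i 0 = Real.cos (i * Real.pi / 5) ∧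
                  V i 1 = Real.sin (i * Real.pi / 5)) →
    ∀ (Abar J : Matrix (Fin 5) (Fin 5) ℝ),
    (∀ i j : Fin 5, Abar i j =
      if (i.val + 2) % 5 = j.val ∨ (j.val + 2) % 5 = i.val then 1 else 0) →
    (∀ i j : Fin 5, J i j = 1) →
    let X := V * Vᵀ
    X.PosSemidef ∧ X.rank = 2 ∧
    (∀ i j : Fin 5, |X i j| =
      if i = j then 1
      else if (i.val + 1) % 5 = j.val ∨ (j.val + 1) % 5 = i.val
        then Real.cos (Real.pi / 5)
        else Real.cos (2 * Real.pi / 5)) ∧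
    (J * Matrix.hadamard X X).trace / (((1 + Abar) * Matrix.hadamard X X).trace)
      = 1 + 10 * Real.cos (Real.pi / 5) ^ 2 / (5 + 10 * Real.cos (2 * Real.pi / 5) ^ 2) ∧
    (J * Matrix.hadamard X X).trace / (((1 + Abar) * Matrix.hadamard X X).trace)
      > 2.099 := by
  intro V hV Abar J hA hJ X
  -- basic sqrt 5 facts
  have h5 : Real.sqrt 5 ^ 2 = 5 := Real.sq_sqrt (by norm_num)
  have hs0 : (0:ℝ) ≤ Real.sqrt 5 := Real.sqrt_nonneg 5
  have hsl : (2.236:ℝ) < Real.sqrt 5 := by nlinarith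
  have hsu : Real.sqrt 5 < 2.2361 := by nlinarith
  -- cos values
  have q1 : Real.cos (π / 5) = (1 + Real.sqrt 5) / 4 := Real.cos_pi_div_five
  have q2 : Real.cos (2 * π / 5) = (Real.sqrt 5 - 1) / 4 := by
    have h : 2 * π / 5 = 2 * (π/5) := by ring
    rw [h, Real.cos_two_mul, q1]; linear_combination h5/8
  have g1 : Real.cos (π * (1/5)) = (1 + Real.sqrt 5) / 4 := by
    rw [show π * (1/5) = π/5 by ring]; exact q1
  have g2 : Real.cos (π * (2/5)) = (Real.sqrt 5 - 1) / 4 := by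
    rw [show π * (2/5) = 2*π/5 by ring]; exact q2
  have g3 : Real.cos (π * (3/5)) = -((Real.sqrt 5 - 1) / 4) := by
    rw [show π * (3/5) = π - 2*π/5 by ring, Real.cos_pi_sub, q2]
  have g4 : Real.cos (π * (4/5)) = -((1 + Real.sqrt 5) / 4) := by
    rw [show π * (4/5) = π - π/5 by ring, Real.cos_pi_sub, q1]
  have g1' : Real.cos (π * (-1/5)) = (1 + Real.sqrt 5) / 4 := by
    rw [show π * (-1/5) = -(π*(1/5)) by ring, Real.cos_neg]; exact g1
  have g2' : Real.cos (π * (-2/5)) = (Real.sqrt 5 - 1) / 4 := by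
    rw [show π * (-2/5) = -(π*(2/5)) by ring, Real.cos_neg]; exact g2
  have g3' : Real.cos (π * (-3/5)) = -((Real.sqrt 5 - 1) / 4) := by
    rw [show π * (-3/5) = -(π*(3/5)) by ring, Real.cos_neg]; exact g3
  have g4' : Real.cos (π * (-4/5)) = -((1 + Real.sqrt 5) / 4) := by
    rw [show π * (-4/5) = -(π*(4/5)) by ring, Real.cos_neg]; exact g4
  -- entries of X
  have hX : ∀ i j : Fin 5, X i j = Real.cos ((i : ℕ) * π / 5 - (j : ℕ) * π / 5) := by
    intro i j
    show (V * Vᵀ) i j = _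
    rw [Real.cos_sub, Matrix.mul_apply, Fin.sum_univ_two]
    simp [(hV i).1, (hV i).2, (hV j).1, (hV j).2, Matrix.transpose_apply]
  have hM : ∀ i j : Fin 5, X i j =
      !![1,(1 + Real.sqrt 5) / 4,(Real.sqrt 5 - 1) / 4,-((Real.sqrt 5 - 1) / 4),-((1 + Real.sqrt 5) / 4);
         (1 + Real.sqrt 5) / 4,1,(1 + Real.sqrt 5) / 4,(Real.sqrt 5 - 1) / 4,-((Real.sqrt 5 - 1) / 4);
         (Real.sqrt 5 - 1) / 4,(1 + Real.sqrt 5) / 4,1,(1 + Real.sqrt 5) / 4,(Real.sqrt 5 - 1) / 4;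
         -((Real.sqrt 5 - 1) / 4),(Real.sqrt 5 - 1) / 4,(1 + Real.sqrt 5) / 4,1,(1 + Real.sqrt 5) / 4;
         -((1 + Real.sqrt 5) / 4),-((Real.sqrt 5 - 1) / 4),(Real.sqrt 5 - 1) / 4,(1 + Real.sqrt 5) / 4,1] i j := by
    intro i j
    rw [hX i j]
    fin_cases i <;> fin_cases j
    all_goals try norm_num
    all_goals try ring_nf
    all_goals simp only [g1, g2, g3, g4, g1', g2', g3', g4']
    all_goals try ring_nf
  -- traces
  have hD : ((1 + Abar) * Matrix.hadamard X X).trace = (35 - 5 * Real.sqrt 5)/4 := by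
    simp only [Matrix.trace, Matrix.diag, Matrix.mul_apply, Matrix.hadamard_apply,
      Matrix.add_apply, Matrix.one_apply, hA, Fin.sum_univ_five, hM]
    try simp (config := { decide := true }) only [Fin.ext_iff]
    norm_num
    ring_nf
    simp only [Matrix.cons_val, Matrix.cons_val_zero, Matrix.cons_val_one]
    ring_nf
    nlinarith [h5]
  have hN : (J * Matrix.hadamard X X).trace = 25/2 := by
    simp only [Matrix.trace, Matrix.diag, Matrix.mul_apply, Matrix.hadamard_apply,
      hJ, Fin.sum_univ_five, hM]
    try simp (config := { decide := true }) only [Fin.ext_iff]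
    norm_num
    ring_nf
    simp only [Matrix.cons_val, Matrix.cons_val_zero, Matrix.cons_val_one]
    ring_nf
    nlinarith [h5]
  -- PSD
  refine ⟨?_, ?_, ?_, ?_, ?_⟩
  · have := Matrix.posSemidef_self_mul_conjTranspose V
    rwa [Matrix.conjTranspose_eq_transpose_of_trivial] at this
  -- rank
  · show (V * Vᵀ).rank = 2
    rw [Matrix.rank_self_mul_transpose]
    have hinj : Function.Injective V.mulVecLin := by
      rw [injective_iff_map_eq_zero]
      intro x hx
      have h0 := congrFun hx 0
      have h1 := congrFun hx 1
      simp only [Matrix.mulVecLin_apply, Matrix.mulVec, dotProduct,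
        Fin.sum_univ_two, Pi.zero_apply] at h0 h1
      rw [(hV 0).1, (hV 0).2] at h0
      rw [(hV 1).1, (hV 1).2] at h1
      norm_num at h0 h1
      have hx0 : x 0 = 0 := h0
      rw [hx0] at h1
      have hsin : Real.sin (π/5) ≠ 0 :=
        ne_of_gt (Real.sin_pos_of_pos_of_lt_pi (by positivity)
          (by nlinarith [Real.pi_pos]))
      have hx1 : x 1 = 0 := by
        rcases mul_eq_zero.mp (by linarith : Real.sin (π/5) * x 1 = 0) with h | h
        · exact absurd h hsin
        · exact h
      funext k
      fin_cases k
      · exact hx0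
      · exact hx1
    unfold Matrix.rank
    rw [LinearMap.finrank_range_of_inj hinj]
    simp
  -- abs entries
  · intro i j
    rw [hM i j, q1, q2]
    have a1 : |(1 + Real.sqrt 5) / 4| = (1 + Real.sqrt 5) / 4 := abs_of_nonneg (by linarith)
    have a2 : |(Real.sqrt 5 - 1) / 4| = (Real.sqrt 5 - 1) / 4 := abs_of_nonneg (by linarith)
    fin_cases i <;> fin_cases j <;>
      simp [abs_neg, a1, a2]
  -- the two trace goals
  · rw [hN, hD, q1, q2]
    rw [div_eq_iff (by nlinarith)]
    field_simp
    ring_nf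
    nlinarith [h5]
  · rw [hN, hD, gt_iff_lt, lt_div_iff₀ (by nlinarith)]
    nlinarith
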